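/- Let n ≥ 2 and let ω ∈ S^{n−1} have ω_j > 0 for all 1 ≤ j ≤ n. Let ℓ = (ℓ_σ)_{σ∈Σ(n)} ∈ ℤ^Σ be such that ω belongs to the cell S_ℓ of the dissection associated with the standard basis, i.e. 2^{−(ℓ_σ+1)} ≤ ω_k/ω_j < 2^{−ℓ_σ} for every σ = (j,k) ∈ Σ. Then {ξ ∈ ℝ^n : |ξ·ω| < (1/n)·max_{1≤j≤n} |ω_j ξ_j|} ⊆ ∪_{σ∈Σ} Ψ_{σ,ℓ_σ}, where Ψ_{σ,ℓ} := Ψ_{σ,ℓ,n}. -/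

import Mathlib

open MeasureTheory Real Set
open scoped ENNReal NNReal FourierTransform RealInnerProductSpace

noncomputable section

/-- Euclidean space `ℝ^n`. -/
abbrev Euc (n : ℕ) : Type := EuclideanSpace ℝ (Fin n)

namespace Paper

variable {n : ℕ}

/-- The Fourier multiplier operator with symbol `m`, acting on functions on `ℝ^n`. -/
def fmul (m : Euc n → ℂ) (f : Euc n → ℂ) : Euc n → ℂ :=
  𝓕⁻ fun ξ => m ξ * 𝓕 f ξ

/-- The directional Hilbert transform along `ω`: the Fourier multiplier
with symbol `sign (ξ ⬝ ω)`. -/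
def dirHilbert (ω : Euc n) (f : Euc n → ℂ) : Euc n → ℂ :=
  fmul (fun ξ => ((Real.sign ⟪ξ, ω⟫ : ℝ) : ℂ)) f

/-- The `L^p(w dx)` norm of an `ℝ≥0∞`-valued function. -/
def lpW (p : ℝ) (w : Euc n → ℝ) (g : Euc n → ℝ≥0∞) : ℝ≥0∞ :=
  (∫⁻ x, g x ^ p * ENNReal.ofReal (w x)) ^ (1 / p)

/-- Pointwise `‖·‖` of a complex valued function, as an `ℝ≥0∞`-valued function. -/
def nn (f : Euc n → ℂ) : Euc n → ℝ≥0∞ := fun x => (‖f x‖₊ : ℝ≥0∞)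

/-- The directional maximal operator along the set of directions `Ω`. -/
def dirMaxE (Ω : Set (Euc n)) (g : Euc n → ℝ≥0∞) : Euc n → ℝ≥0∞ := fun x =>
  ⨆ (ω : Euc n) (_ : ω ∈ Ω) (ε : ℝ) (_ : 0 < ε),
    (ENNReal.ofReal (2 * ε))⁻¹ * ∫⁻ t in Ioo (-ε) ε, g (x + t • ω)

/-- A weight: continuous, strictly positive, locally integrable. -/
def IsWeight (w : Euc n → ℝ) : Prop :=
  Continuous w ∧ (∀ x, 0 < w x) ∧ LocallyIntegrable w

/-- Average of a weight over the segment `{x + tω : |t| < η}`. -/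
def segAvg (w : Euc n → ℝ) (x ω : Euc n) (η : ℝ) : ℝ≥0∞ :=
  (ENNReal.ofReal (2 * η))⁻¹ * ∫⁻ t in Ioo (-η) η, ENNReal.ofReal (w (x + t • ω))

/-- The directional Muckenhoupt `A_p^Ω` constant, `1 < p < ∞`. -/
def ApC (Ω : Set (Euc n)) (p : ℝ) (w : Euc n → ℝ) : ℝ≥0∞ :=
  ⨆ (ω : Euc n) (_ : ω ∈ Ω) (x : Euc n) (η : ℝ) (_ : 0 < η),
    segAvg w x ω η * segAvg (fun y => w y ^ (-1 / (p - 1))) x ω η ^ (p - 1)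

/-- The directional `A_1^Ω` constant. -/
def A1C (Ω : Set (Euc n)) (w : Euc n → ℝ) : ℝ≥0∞ :=
  ⨆ x : Euc n, dirMaxE Ω (fun y => ENNReal.ofReal (w y)) x / ENNReal.ofReal (w x)

/-- The operator norm of the directional maximal operator `M_Ω` on `L^p(w)`. -/
def maxOpNorm (Ω : Set (Euc n)) (p : ℝ) (w : Euc n → ℝ) : ℝ≥0∞ :=
  sInf {A : ℝ≥0∞ | ∀ g : Euc n → ℝ≥0∞, Measurable g →
    lpW p w (dirMaxE Ω g) ≤ A * lpW p w g}

/-- The unit sphere `S^{n-1}`. -/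
def unitSphere (n : ℕ) : Set (Euc n) := {ω | ‖ω‖ = 1}

/-- The sector `S_{σ,ℓ}` of a dissection determined by the pair of directions `(u, v)`. -/
def sectorB (u v : Euc n) (ℓ : ℤ) : Set (Euc n) :=
  {ω | ‖ω‖ = 1 ∧ (2 : ℝ) ^ (-(ℓ + 1)) ≤ |⟪ω, v⟫| / |⟪ω, u⟫| ∧
    |⟪ω, v⟫| / |⟪ω, u⟫| < (2 : ℝ) ^ (-ℓ)}

/-- The sector `S_{σ,∞}` of a dissection determined by the pair of directions `(u, v)`. -/
def sectorInfB (u v : Euc n) : Set (Euc n) :=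
  {ω | ‖ω‖ = 1 ∧ (⟪ω, u⟫ = 0 ∨ ⟪ω, v⟫ = 0)}

/-- Lacunary sets of directions of finite order. -/
def IsLacunary (n : ℕ) : ℕ → Set (Euc n) → Prop
  | 0, Ω => Ω.Subsingleton
  | L + 1, Ω => ∃ (d : ℕ) (b : Fin d → Euc n),
      Orthonormal ℝ b ∧
      Submodule.span ℝ (Set.range b) = Submodule.span ℝ Ω ∧
      ∀ j k : Fin d, j < k →
        (∀ ℓ : ℤ, IsLacunary n L (Ω ∩ sectorB (b j) (b k) ℓ)) ∧
        IsLacunary n L (Ω ∩ sectorInfB (b j) (b k))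

/-- Lacunary sets of directions of finite order, with all basis vectors of the
witnessing dissections contained in the set. -/
def IsLacunaryB (n : ℕ) : ℕ → Set (Euc n) → Prop
  | 0, Ω => Ω.Subsingleton
  | L + 1, Ω => ∃ (d : ℕ) (b : Fin d → Euc n),
      Orthonormal ℝ b ∧ Set.range b ⊆ Ω ∧
      Submodule.span ℝ (Set.range b) = Submodule.span ℝ Ω ∧
      ∀ j k : Fin d, j < k →
        (∀ ℓ : ℤ, IsLacunaryB n L (Ω ∩ sectorB (b j) (b k) ℓ)) ∧
        IsLacunaryB n L (Ω ∩ sectorInfB (b j) (b k))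

/-- The index set `Σ(n) = {(j,k) : 1 ≤ j < k ≤ n}`. -/
abbrev SigmaIdx (n : ℕ) : Type := {σ : Fin n × Fin n // σ.1 < σ.2}

/-- The sector `S_{σ,ℓ}` relative to the standard coordinate basis. -/
def sectorStd (n : ℕ) (σ : SigmaIdx n) (ℓ : ℤ) : Set (Euc n) :=
  {ω | ‖ω‖ = 1 ∧ (2 : ℝ) ^ (-(ℓ + 1)) ≤ |ω σ.1.2| / |ω σ.1.1| ∧
    |ω σ.1.2| / |ω σ.1.1| < (2 : ℝ) ^ (-ℓ)}

/-- The cell `S_ℓ` relative to the standard coordinate basis. -/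
def cellStd (n : ℕ) (ℓ : SigmaIdx n → ℤ) : Set (Euc n) :=
  ⋂ σ : SigmaIdx n, sectorStd n σ (ℓ σ)

/-- The set of standard basis directions `{e_1, …, e_n}`. -/
def stdDirs (n : ℕ) : Set (Euc n) :=
  Set.range fun i : Fin n => (EuclideanSpace.single i (1 : ℝ) : Euc n)

/-- The strong Muckenhoupt `A_p^*` constant. -/
def ApStar (n : ℕ) (p : ℝ) (w : Euc n → ℝ) : ℝ≥0∞ := ApC (stdDirs n) p w

/-- The property characterizing the function `φ⁺`. -/
def IsPhiPlus (n : ℕ) (φ : ℝ → ℝ) : Prop :=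
  ContDiff ℝ (⊤ : ℕ∞) φ ∧ (∀ x, φ x ∈ Icc (0 : ℝ) 1) ∧
  (∀ x ≤ -((n : ℝ) + 1), φ x = 0) ∧ (∀ x, -(n : ℝ) ≤ x → φ x = 1)

/-- The property characterizing the function `φ⁻`. -/
def IsPhiMinus (n : ℕ) (φ : ℝ → ℝ) : Prop :=
  ContDiff ℝ (⊤ : ℕ∞) φ ∧ (∀ x, φ x ∈ Icc (0 : ℝ) 1) ∧
  (∀ x ≤ -(1 / (2 * (n : ℝ))), φ x = 1) ∧ (∀ x, -(1 / (2 * ((n : ℝ) + 1))) ≤ x → φ x = 0)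

/-- The symbol argument `2^ℓ ξ_{σ(1)} / ξ_{σ(2)}`. -/
def symArg (σ : SigmaIdx n) (ℓ : ℤ) (ξ : Euc n) : ℝ :=
  (2 : ℝ) ^ ℓ * (ξ σ.1.1 / ξ σ.1.2)

/-- The symbol of `K^{ε}_{σ,ℓ}` with `ε ∈ {+,−}`; `true` encodes `+`. -/
def Ksym (φp φm : ℝ → ℝ) (ε : Bool) (σ : SigmaIdx n) (ℓ : ℤ) (ξ : Euc n) : ℂ :=
  (((if ε then φp else φm) (symArg σ ℓ ξ) : ℝ) : ℂ)

/-- The symbol of `K^{∘}_{σ,ℓ}`. -/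
def KcircSym (φp φm : ℝ → ℝ) (σ : SigmaIdx n) (ℓ : ℤ) (ξ : Euc n) : ℂ :=
  ((φp (symArg σ ℓ ξ) * φm (symArg σ ℓ ξ) : ℝ) : ℂ)

/-- The operator `K^{ε}_{U,ℓ}`, `ε ∈ {+,−}^U` (composition of the commuting
multiplier operators, i.e. the multiplier with the product symbol). -/
def KUeps (φp φm : ℝ → ℝ) (U : Finset (SigmaIdx n)) (ε : SigmaIdx n → Bool)
    (ℓ : SigmaIdx n → ℤ) : (Euc n → ℂ) → Euc n → ℂ :=
  fmul fun ξ => ∏ σ ∈ U, Ksym φp φm (ε σ) σ (ℓ σ) ξ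

/-- The operator `K_{U,ℓ}` (all signs equal to `∘`). -/
def KUcirc (φp φm : ℝ → ℝ) (U : Finset (SigmaIdx n)) (ℓ : SigmaIdx n → ℤ) :
    (Euc n → ℂ) → Euc n → ℂ :=
  fmul fun ξ => ∏ σ ∈ U, KcircSym φp φm σ (ℓ σ) ξ

/-- The property characterizing the Littlewood–Paley function `p`. -/
def IsLPfun (pf : ℝ → ℝ) : Prop :=
  ContDiff ℝ (⊤ : ℕ∞) pf ∧ (∀ x, pf x ≠ 0 → 1 / 2 < |x| ∧ |x| < 2) ∧
  ∀ ξ : ℝ, ξ ≠ 0 → HasSum (fun t : ℤ => pf ((2 : ℝ) ^ (-(t : ℝ)) * ξ)) 1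

/-- The Littlewood–Paley projection `P_t^υ`. -/
def Pop (pf : ℝ → ℝ) (υ : Fin n) (t : ℝ) : (Euc n → ℂ) → Euc n → ℂ :=
  fmul fun ξ => ((pf ((2 : ℝ) ^ (-t) * ξ υ) : ℝ) : ℂ)

/-- Open axis-parallel rectangle. -/
def rect (a b : Fin n → ℝ) : Set (Euc n) := {y | ∀ i, y i ∈ Ioo (a i) (b i)}

/-- The strong maximal function. -/
def strongMaxE (g : Euc n → ℝ≥0∞) : Euc n → ℝ≥0∞ := fun x =>
  ⨆ (a : Fin n → ℝ) (b : Fin n → ℝ) (_ : x ∈ rect a b),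
    (∫⁻ y in rect a b, g y) / volume (rect a b)

/-- One of the `2^n` open coordinate orthants. -/
def orthant (n : ℕ) (s : Fin n → Bool) : Set (Euc n) :=
  {ξ | ∀ i, if s i then 0 < ξ i else ξ i < 0}

/-- The two-dimensional wedge `Ψ_{σ,ℓ,γ}`. -/
def wedge (n : ℕ) (σ : SigmaIdx n) (ℓ : ℤ) (γ : ℝ) : Set (Euc n) :=
  {ξ | ξ σ.1.2 ≠ 0 ∧ (2 : ℝ) ^ (-(ℓ + 1)) / γ ≤ -(ξ σ.1.1 / ξ σ.1.2) ∧
    -(ξ σ.1.1 / ξ σ.1.2) < γ * (2 : ℝ) ^ (-ℓ)}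

/-- The best constant of a sublinear operator `T` from `L^p(w)` (tested on Schwartz
functions) to `L^p(w)`. -/
def opNormW (p : ℝ) (w : Euc n → ℝ) (T : (Euc n → ℂ) → Euc n → ℝ≥0∞) : ℝ≥0∞ :=
  sInf {A : ℝ≥0∞ | ∀ f : SchwartzMap (Euc n) ℂ, lpW p w (T ⇑f) ≤ A * lpW p w (nn ⇑f)}

/-- Maximal directional Hilbert transform along a finite set of directions. -/
def maxHilbert (O : Finset (Euc n)) (f : Euc n → ℂ) : Euc n → ℝ≥0∞ := fun x =>
  ⨆ ω ∈ O, (‖dirHilbert ω f x‖₊ : ℝ≥0∞)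

/-- `Θ_N(Ω,w)`: the largest operator norm of `H_O` on `L²(w)` over `O ⊆ Ω` with `#O ≤ N`. -/
def ThetaN (N : ℕ) (Ω : Set (Euc n)) (w : Euc n → ℝ) : ℝ≥0∞ :=
  ⨆ (O : Finset (Euc n)) (_ : ↑O ⊆ Ω) (_ : O.card ≤ N),
    opNormW 2 w (maxHilbert O)

end Paper

open Paper

/-- inclusion `eq:inclusion`.
If `ω` lies in the cell `S_ℓ` (and has positive coordinates), then the region
`{ξ : |ξ·ω| < (1/n)·max_j |ω_j ξ_j|}` is covered by the wedges `Ψ_{σ,ℓ_σ} = Ψ_{σ,ℓ_σ,n}`. -/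
theorem cone_subset_union_wedges (n : ℕ) (hn : 2 ≤ n) (ω : Euc n) (hω : ‖ω‖ = 1)
    (hpos : ∀ j, 0 < ω j) (ℓ : SigmaIdx n → ℤ)
    (hcell : ∀ σ : SigmaIdx n,
      (2 : ℝ) ^ (-(ℓ σ + 1)) ≤ ω σ.1.2 / ω σ.1.1 ∧
        ω σ.1.2 / ω σ.1.1 < (2 : ℝ) ^ (-(ℓ σ))) :
    {ξ : Euc n | |⟪ξ, ω⟫| < (1 / (n : ℝ)) * ⨆ j : Fin n, |ω j * ξ j|} ⊆
      ⋃ σ : SigmaIdx n, wedge n σ (ℓ σ) n := by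
  intro ξ hξ
  simp only [Set.mem_setOf_eq] at hξ
  have hn0 : (0:ℝ) < n := by
    have : (0:ℕ) < n := by omega
    exact_mod_cast this
  have hnR : (2:ℝ) ≤ n := by exact_mod_cast hn
  set a : Fin n → ℝ := fun j => ω j * ξ j with ha
  haveI : Nonempty (Fin n) := ⟨⟨0, by omega⟩⟩
  obtain ⟨j₀, hj₀⟩ := Finite.exists_max (fun j => |a j|)
  set M : ℝ := |a j₀| with hMdef
  have hsup : (⨆ j : Fin n, |ω j * ξ j|) = M := by
    apply le_antisymm
    · exact ciSup_le fun j => hj₀ j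
    · exact le_ciSup (Set.Finite.bddAbove (Set.finite_range fun j => |ω j * ξ j|)) j₀
  rw [hsup] at hξ
  have hM0 : 0 < M := by
    by_contra h
    push_neg at h
    have h1 : (1/(n:ℝ)) * M ≤ 0 := mul_nonpos_of_nonneg_of_nonpos (by positivity) h
    linarith [abs_nonneg (⟪ξ, ω⟫ : ℝ)]
  have hMn0 : 0 < M / n := div_pos hM0 hn0
  have hinner : (⟪ξ, ω⟫ : ℝ) = ∑ j, a j := by
    simp [PiLp.inner_apply, RCLike.inner_apply, ha, mul_comm]
  have hdivM : (1/(n:ℝ)) * M = M / n := by ring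
  -- find an index with opposite sign and large absolute value
  have hkey : ∃ q, a j₀ * a q < 0 ∧ M / n ≤ |a q| := by
    by_contra h
    push_neg at h
    have hb : ∀ q, -(M/n) < a j₀ * a q / M := by
      intro q
      rcases lt_or_ge (a j₀ * a q) 0 with hneg | hge
      · have h2 := h q hneg
        have habs : |a j₀ * a q / M| = |a q| := by
          rw [abs_div, abs_mul, abs_of_pos hM0, ← hMdef]
          field_simp
        have := neg_abs_le (a j₀ * a q / M)
        rw [habs] at this
        linarith
      · have : 0 ≤ a j₀ * a q / M := div_nonneg hge hM0.le
        linarith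
    have hbj0 : a j₀ * a j₀ / M = M := by
      have h1 : a j₀ * a j₀ = M * M := by rw [hMdef, abs_mul_abs_self]
      rw [h1]
      field_simp
    have hcard : ((Finset.univ : Finset (Fin n)).erase j₀).card = n - 1 := by
      simp [Finset.card_erase_of_mem]
    have hene : ((Finset.univ : Finset (Fin n)).erase j₀).Nonempty := by
      rw [← Finset.card_pos, hcard]; omega
    have h1 : ((n:ℝ) - 1) * (-(M/n)) <
        ∑ q ∈ (Finset.univ : Finset (Fin n)).erase j₀, a j₀ * a q / M := by
      have := Finset.sum_lt_sum_of_nonempty hene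
        (f := fun _ => -(M/n)) (g := fun q => a j₀ * a q / M) (fun q _ => hb q)
      rw [Finset.sum_const, hcard, nsmul_eq_mul] at this
      have hcast : ((n - 1 : ℕ) : ℝ) = (n:ℝ) - 1 := by
        have : 1 ≤ n := by omega
        push_cast [this]
        ring
      rwa [hcast] at this
    have htot : M/n < ∑ q, a j₀ * a q / M := by
      rw [← Finset.add_sum_erase _ _ (Finset.mem_univ j₀), hbj0]
      have heq : M + ((n:ℝ) - 1) * (-(M/n)) = M/n := by
        field_simp
        ring
      linarith
    have hsb : |∑ q, a j₀ * a q / M| < M/n := by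
      have heq2 : ∑ q, a j₀ * a q / M = a j₀ / M * ∑ q, a q := by
        rw [Finset.mul_sum]
        exact Finset.sum_congr rfl fun q _ => by ring
      rw [heq2, abs_mul, abs_div, ← hMdef, abs_of_pos hM0, div_self hM0.ne', one_mul, ← hinner, ← hdivM]
      exact hξ
    have := le_abs_self (∑ q, a j₀ * a q / M)
    linarith
  obtain ⟨q, hq1, hq2⟩ := hkey
  have hqne : q ≠ j₀ := by
    intro h
    rw [h] at hq1
    exact absurd hq1 (not_lt.2 (mul_self_nonneg _))
  have hMleM : M / n ≤ M := by
    rw [div_le_iff₀ hn0]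
    nlinarith
  have hjM : M / n ≤ |a j₀| := by rw [← hMdef]; exact hMleM
  -- main wedge membership lemma
  have main : ∀ (j k : Fin n) (hjk : j < k), a j * a k < 0 → M/n ≤ |a j| → M/n ≤ |a k| →
      ξ ∈ wedge n ⟨(j,k), hjk⟩ (ℓ ⟨(j,k), hjk⟩) n := by
    intro j k hjk hjka hAj hAk
    set σ : SigmaIdx n := ⟨(j,k), hjk⟩ with hσ
    obtain ⟨hW1, hW2⟩ := hcell σ
    have hωj := hpos j
    have hωk := hpos k
    have haj0 : a j ≠ 0 := by
      intro h
      rw [h, abs_zero] at hAj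
      linarith
    have hak0 : a k ≠ 0 := by
      intro h
      rw [h, abs_zero] at hAk
      linarith
    have hξk : ξ k ≠ 0 := by
      intro h
      apply hak0
      simp [ha, h]
    have hξj : ξ j ≠ 0 := by
      intro h
      apply haj0
      simp [ha, h]
    have hajk : |a j| ≤ M := hj₀ j
    have hakk : |a k| ≤ M := hj₀ k
    have hakpos : 0 < |a k| := abs_pos.2 hak0
    have hajpos : 0 < |a j| := abs_pos.2 haj0
    -- ratio bounds
    have hABl : 1/(n:ℝ) ≤ |a j| / |a k| := by
      rw [div_le_div_iff₀ hn0 hakpos, one_mul]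
      have : (n:ℝ) * (M/n) ≤ n * |a j| := by
        apply mul_le_mul_of_nonneg_left hAj hn0.le
      have hMeq : (n:ℝ) * (M/n) = M := by field_simp
      linarith
    have hABu : |a j| / |a k| ≤ (n:ℝ) := by
      rw [div_le_iff₀ hakpos]
      have : (n:ℝ) * (M/n) ≤ n * |a k| := by
        apply mul_le_mul_of_nonneg_left hAk hn0.le
      have hMeq : (n:ℝ) * (M/n) = M := by field_simp
      linarith
    have hdivneg : a j / a k < 0 := by
      rcases mul_neg_iff.1 hjka with ⟨h1, h2⟩ | ⟨h1, h2⟩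
      · exact div_neg_of_pos_of_neg h1 h2
      · exact div_neg_of_neg_of_pos h1 h2
    have heq : -(ξ j / ξ k) = (|a j| / |a k|) * (ω k / ω j) := by
      have h2 : |a j| / |a k| = -(a j / a k) := by
        rw [← abs_div, abs_of_neg hdivneg]
      rw [h2]
      simp only [ha]
      field_simp
    have hWpos : 0 < ω k / ω j := div_pos hωk hωj
    have hpow1 : (0:ℝ) < (2:ℝ) ^ (-(ℓ σ + 1)) := by positivity
    have hpow2 : (0:ℝ) < (2:ℝ) ^ (-(ℓ σ)) := by positivity
    refine ⟨hξk, ?_, ?_⟩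
    · -- lower bound
      show (2:ℝ) ^ (-(ℓ σ + 1)) / n ≤ -(ξ j / ξ k)
      rw [heq]
      have h3 : (2:ℝ) ^ (-(ℓ σ + 1)) / n = (1/(n:ℝ)) * (2:ℝ) ^ (-(ℓ σ + 1)) := by ring
      rw [h3]
      apply mul_le_mul hABl hW1 hpow1.le (by positivity)
    · -- upper bound
      show -(ξ j / ξ k) < (n:ℝ) * (2:ℝ) ^ (-(ℓ σ))
      rw [heq]
      calc |a j| / |a k| * (ω k / ω j) ≤ (n:ℝ) * (ω k / ω j) :=
            mul_le_mul_of_nonneg_right hABu hWpos.le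
        _ < (n:ℝ) * (2:ℝ) ^ (-(ℓ σ)) := by
            apply mul_lt_mul_of_pos_left hW2 hn0
  rcases lt_or_gt_of_ne hqne with h | h
  · exact Set.mem_iUnion.2 ⟨⟨(q, j₀), h⟩,
      main q j₀ h (by rw [mul_comm]; exact hq1) hq2 hjM⟩
  · exact Set.mem_iUnion.2 ⟨⟨(j₀, q), h⟩, main j₀ q h hq1 hjM hq2⟩
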